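/- Under the Hogwild! noise model, the mismatch error satisfies E‖x̂_j - x_j‖² ≤ γ²M²(2τ + 8τ²·Δ̄_C/n), where x̂_j - x_j = γ·∑_{i=j-τ, i≠j}^{j+τ} S_i^j g(x̂_i, s_i), each S_i^j is a diagonal sign matrix, ‖g(·,·)‖ ≤ M, and any two independent uniformly sampled hyperedges intersect with probability at most 2Δ̄_C/n. -/

import Mathlib

open Finset MeasureTheory
open scoped RealInnerProductSpace

theorem hogwild_mismatch_bound
    (d n k τ : ℕ) (hk : k ≤ 2 * τ)
    (γ M ΔC : ℝ) (hγ : 0 < γ) (hM : 0 ≤ M) (hΔC : 0 ≤ ΔC) (hn : 0 < n)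
    {Ω : Type*} [MeasurableSpace Ω] (μ : Measure Ω) [IsProbabilityMeasure μ]
    (G : Fin k → Ω → EuclideanSpace ℝ (Fin d))
    (s : Fin k → Ω → Finset (Fin d))
    (σ : Fin k → Ω → Fin d → ℝ)
    (hσ : ∀ i ω j, σ i ω j ∈ ({-1, 0, 1} : Set ℝ))
    (hsupp : ∀ i ω, Function.support (G i ω) ⊆ (s i ω : Set (Fin d)))
    (hGbound : ∀ i ω, ‖G i ω‖ ≤ M)
    (hintersect : ∀ i j : Fin k, i ≠ j →
      (μ {ω | (s i ω ∩ s j ω).Nonempty}).toReal ≤ 2 * ΔC / n)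
    (D : Ω → EuclideanSpace ℝ (Fin d))
    (hD : ∀ ω, D ω = γ • ∑ i, (WithLp.toLp 2 (fun v => σ i ω v * G i ω v) : EuclideanSpace ℝ (Fin d))) :
    ∫ ω, ‖D ω‖ ^ 2 ∂μ ≤ γ ^ 2 * M ^ 2 * (2 * τ + 8 * τ ^ 2 * ΔC / n) := by
  classical
  set u : Fin k → Ω → EuclideanSpace ℝ (Fin d) :=
    fun i ω => WithLp.toLp 2 (fun v => σ i ω v * G i ω v) with hu
  have hσabs : ∀ i ω v, |σ i ω v| ≤ 1 := by
    intro i ω v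
    rcases hσ i ω v with h | h | h <;> simp_all
  have hunorm : ∀ i ω, ‖u i ω‖ ≤ M := by
    intro i ω
    refine le_trans ?_ (hGbound i ω)
    rw [EuclideanSpace.norm_eq, EuclideanSpace.norm_eq]
    apply Real.sqrt_le_sqrt
    apply Finset.sum_le_sum
    intro v _
    have h1 : ‖u i ω v‖ ≤ ‖G i ω v‖ := by
      simp only [hu, WithLp.ofLp_toLp, Real.norm_eq_abs, abs_mul]
      exact mul_le_of_le_one_left (abs_nonneg _) (hσabs i ω v)
    exact pow_le_pow_left₀ (norm_nonneg _) h1 2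
  have hM2 : ∀ i j ω, ⟪u i ω, u j ω⟫ ≤ M ^ 2 := by
    intro i j ω
    calc ⟪u i ω, u j ω⟫ ≤ ‖u i ω‖ * ‖u j ω‖ := real_inner_le_norm _ _
    _ ≤ M * M := mul_le_mul (hunorm i ω) (hunorm j ω) (norm_nonneg _) hM
    _ = M ^ 2 := by ring
  have hzero : ∀ i j ω, ¬ (s i ω ∩ s j ω).Nonempty → ⟪u i ω, u j ω⟫ = 0 := by
    intro i j ω hns
    rw [PiLp.inner_apply]
    apply Finset.sum_eq_zero
    intro v _
    simp only [RCLike.inner_apply, conj_trivial, hu, WithLp.ofLp_toLp]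
    by_cases h1 : G i ω v = 0
    · simp [h1]
    by_cases h2 : G j ω v = 0
    · simp [h2]
    exfalso
    exact hns ⟨v, Finset.mem_inter.mpr ⟨hsupp i ω h1, hsupp j ω h2⟩⟩
  -- measurable hulls
  set B : Fin k → Fin k → Set Ω :=
    fun i j => MeasureTheory.toMeasurable μ {ω | (s i ω ∩ s j ω).Nonempty} with hB
  have hBmeas : ∀ i j, MeasurableSet (B i j) := fun i j => measurableSet_toMeasurable _ _
  have hBμ : ∀ i j : Fin k, i ≠ j → (μ (B i j)).toReal ≤ 2 * ΔC / n := by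
    intro i j hij
    rw [hB]
    rw [measure_toMeasurable]
    exact hintersect i j hij
  set g : Ω → ℝ := fun ω => γ ^ 2 * ∑ i : Fin k, ∑ j : Fin k,
    (if i = j then M ^ 2 else M ^ 2 * (B i j).indicator (fun _ => (1:ℝ)) ω) with hg
  have hpt : ∀ ω, ‖D ω‖ ^ 2 ≤ g ω := by
    intro ω
    rw [hD ω, norm_smul, mul_pow, Real.norm_eq_abs, sq_abs, hg]
    apply mul_le_mul_of_nonneg_left _ (sq_nonneg γ)
    have : ‖∑ i, u i ω‖ ^ 2 = ∑ i : Fin k, ∑ j : Fin k, ⟪u i ω, u j ω⟫ := by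
      rw [← real_inner_self_eq_norm_sq, sum_inner]
      exact Finset.sum_congr rfl fun i _ => inner_sum _ _ _
    rw [this]
    apply Finset.sum_le_sum
    intro i _
    apply Finset.sum_le_sum
    intro j _
    by_cases hij : i = j
    · simp only [hij, if_pos rfl]
      exact hM2 j j ω
    · rw [if_neg hij]
      by_cases hω : ω ∈ B i j
      · rw [Set.indicator_of_mem hω]
        simpa using hM2 i j ω
      · rw [Set.indicator_of_notMem hω, mul_zero]
        have hns : ¬ (s i ω ∩ s j ω).Nonempty := by
          intro hns
          exact hω (MeasureTheory.subset_toMeasurable μ _ hns)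
        exact le_of_eq (hzero i j ω hns)
  have hind_int : ∀ i j, Integrable ((B i j).indicator (fun _ => (1:ℝ))) μ := by
    intro i j
    rw [integrable_indicator_iff (hBmeas i j)]
    exact integrableOn_const (measure_ne_top μ _)
  have hterm_int : ∀ i j : Fin k,
      Integrable (fun ω => (if i = j then M ^ 2
        else M ^ 2 * (B i j).indicator (fun _ => (1:ℝ)) ω)) μ := by
    intro i j
    by_cases hij : i = j
    · simp only [if_pos hij]; exact integrable_const _
    · simp only [if_neg hij]; exact (hind_int i j).const_mul _
  have hg_int : Integrable g μ := by
    rw [hg]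
    apply Integrable.const_mul
    apply integrable_finset_sum
    intro i _
    exact integrable_finset_sum _ (fun j _ => hterm_int i j)
  have hD_nonneg : 0 ≤ᵐ[μ] fun ω => ‖D ω‖ ^ 2 :=
    Filter.Eventually.of_forall fun ω => sq_nonneg _
  have hle : (fun ω => ‖D ω‖ ^ 2) ≤ᵐ[μ] g := Filter.Eventually.of_forall hpt
  calc ∫ ω, ‖D ω‖ ^ 2 ∂μ ≤ ∫ ω, g ω ∂μ := integral_mono_of_nonneg hD_nonneg hg_int hle
  _ ≤ γ ^ 2 * M ^ 2 * (2 * τ + 8 * τ ^ 2 * ΔC / n) := by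
      rw [hg, integral_const_mul, integral_finset_sum _ (fun i _ => integrable_finset_sum _ (fun j _ => hterm_int i j))]
      have hsum : ∀ i : Fin k, ∫ ω, (∑ j : Fin k, (if i = j then M ^ 2
          else M ^ 2 * (B i j).indicator (fun _ => (1:ℝ)) ω)) ∂μ
          = ∑ j : Fin k, ∫ ω, (if i = j then M ^ 2
          else M ^ 2 * (B i j).indicator (fun _ => (1:ℝ)) ω) ∂μ :=
        fun i => integral_finset_sum _ (fun j _ => hterm_int i j)
      have hterm_val : ∀ i j : Fin k, ∫ ω, (if i = j then M ^ 2
          else M ^ 2 * (B i j).indicator (fun _ => (1:ℝ)) ω) ∂μ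
          ≤ if i = j then M ^ 2 else M ^ 2 * (2 * ΔC / n) := by
        intro i j
        by_cases hij : i = j
        · simp [hij]
        · simp only [if_neg hij]
          rw [integral_const_mul]
          apply mul_le_mul_of_nonneg_left _ (sq_nonneg M)
          have := MeasureTheory.integral_indicator_const (1:ℝ) (hBmeas i j) (μ := μ)
          rw [this, smul_eq_mul, mul_one]
          exact hBμ i j hij
      have hcount : ∑ i : Fin k, ∑ j : Fin k,
          (if i = j then M ^ 2 else M ^ 2 * (2 * ΔC / n))
          ≤ 2 * τ * M ^ 2 + 4 * τ ^ 2 * (M ^ 2 * (2 * ΔC / n)) := by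
        set X : ℝ := M ^ 2 * (2 * ΔC / n) with hX
        have hX0 : 0 ≤ X := by positivity
        have hrow : ∀ i : Fin k, ∑ j : Fin k, (if i = j then M ^ 2 else X)
            = k * X + (M ^ 2 - X) := by
          intro i
          have : ∀ j : Fin k, (if i = j then M ^ 2 else X)
              = X + (if i = j then M ^ 2 - X else 0) := by
            intro j; by_cases h : i = j <;> simp [h]
          simp only [this, Finset.sum_add_distrib, Finset.sum_const,
            Finset.sum_ite_eq, Finset.mem_univ, if_pos, Finset.card_univ,
            Fintype.card_fin, nsmul_eq_mul]
        simp only [hrow, Finset.sum_const, Finset.card_univ, Fintype.card_fin,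
          nsmul_eq_mul]
        have hkτ : (k : ℝ) ≤ 2 * τ := by exact_mod_cast hk
        have hk0 : (0 : ℝ) ≤ k := Nat.cast_nonneg k
        have h2τ : (0:ℝ) ≤ 2 * τ := by positivity
        nlinarith [mul_le_mul_of_nonneg_right (mul_le_mul hkτ hkτ hk0 h2τ) hX0,
          mul_le_mul_of_nonneg_right hkτ (sq_nonneg M), mul_nonneg hk0 hX0]
      calc γ ^ 2 * ∑ i : Fin k, ∫ ω, (∑ j : Fin k, (if i = j then M ^ 2
              else M ^ 2 * (B i j).indicator (fun _ => (1:ℝ)) ω)) ∂μ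
          ≤ γ ^ 2 * ∑ i : Fin k, ∑ j : Fin k,
              (if i = j then M ^ 2 else M ^ 2 * (2 * ΔC / n)) := by
            apply mul_le_mul_of_nonneg_left _ (sq_nonneg γ)
            apply Finset.sum_le_sum
            intro i _
            rw [hsum i]
            exact Finset.sum_le_sum fun j _ => hterm_val i j
        _ ≤ γ ^ 2 * (2 * τ * M ^ 2 + 4 * τ ^ 2 * (M ^ 2 * (2 * ΔC / n))) :=
            mul_le_mul_of_nonneg_left hcount (sq_nonneg γ)
        _ = γ ^ 2 * M ^ 2 * (2 * τ + 8 * τ ^ 2 * ΔC / n) := by ring
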